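/- Let G=(V,W) be a connected edge-weighted graph with Vol(V)=1 and let λ_2 be the second smallest eigenvalue of the normalized Laplacian L_D. If λ_2 ≤ 1, then the isoperimetric number satisfies h(G) ≤ √(λ_2(2−λ_2)). -/

import Mathlib

open Finset Matrix

noncomputable section

/-- weighted cut between two vertex subsets: `w(X,Y) = ∑_{i∈X} ∑_{j∈Y} w_{ij}` -/
def wcut {n : ℕ} (W : Matrix (Fin n) (Fin n) ℝ) (X Y : Finset (Fin n)) : ℝ :=
  ∑ i ∈ X, ∑ j ∈ Y, W i j

/-- generalized degree `d_i = ∑_j w_{ij}` -/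
def gdeg {n : ℕ} (W : Matrix (Fin n) (Fin n) ℝ) (i : Fin n) : ℝ := ∑ j, W i j

/-- volume of a vertex subset: `Vol(U) = ∑_{i∈U} d_i` -/
def gvol {n : ℕ} (W : Matrix (Fin n) (Fin n) ℝ) (U : Finset (Fin n)) : ℝ :=
  ∑ i ∈ U, gdeg W i

/-- the normalized adjacency matrix `D^{-1/2} W D^{-1/2}` -/
def normAdj {n : ℕ} (W : Matrix (Fin n) (Fin n) ℝ) : Matrix (Fin n) (Fin n) ℝ :=
  Matrix.of fun i j => W i j / (Real.sqrt (gdeg W i) * Real.sqrt (gdeg W j))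

/-- the normalized Laplacian `L_D = I - D^{-1/2} W D^{-1/2}` -/
def normLap {n : ℕ} (W : Matrix (Fin n) (Fin n) ℝ) : Matrix (Fin n) (Fin n) ℝ :=
  1 - normAdj W

/-- the normalized modularity matrix `B_D = D^{-1/2} W D^{-1/2} - √d √dᵀ` -/
def modMat {n : ℕ} (W : Matrix (Fin n) (Fin n) ℝ) : Matrix (Fin n) (Fin n) ℝ :=
  normAdj W - Matrix.of fun i j => Real.sqrt (gdeg W i) * Real.sqrt (gdeg W j)

/-- Euclidean inner product on `ℝ^n` -/
def dotR {n : ℕ} (u v : Fin n → ℝ) : ℝ := ∑ i, u i * v i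

/-- a family of pairwise orthogonal unit-norm vectors of `ℝ^n` -/
def IsOrthonormalSys {m n : ℕ} (u : Fin m → Fin n → ℝ) : Prop :=
  ∀ i j, dotR (u i) (u j) = if i = j then 1 else 0

/-- spectral norm (largest singular value) of a real matrix -/
def specNorm {n : ℕ} (M : Matrix (Fin n) (Fin n) ℝ) : ℝ :=
  ‖Matrix.toEuclideanCLM (𝕜 := ℝ) M‖

/-- connectivity of the weighted graph (irreducibility of `W`) -/
def gConnected {n : ℕ} (W : Matrix (Fin n) (Fin n) ℝ) : Prop :=
  (SimpleGraph.fromRel fun i j => W i j ≠ 0).Connected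

/-- the `a`-th cluster of the partition encoded by `P : Fin n → Fin k` -/
def partSet {n k : ℕ} (P : Fin n → Fin k) (a : Fin k) : Finset (Fin n) :=
  univ.filter fun j => P j = a

/-- `(A,B)` is an `α`-volume regular pair:
for all `X ⊆ A`, `Y ⊆ B`, `|w(X,Y) - ρ(A,B) Vol(X) Vol(Y)| ≤ α √(Vol(A) Vol(B))`,
where `ρ(A,B) = w(A,B)/(Vol(A) Vol(B))`. -/
def volReg {n : ℕ} (W : Matrix (Fin n) (Fin n) ℝ) (α : ℝ) (A B : Finset (Fin n)) : Prop :=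
  ∀ X ⊆ A, ∀ Y ⊆ B,
    |wcut W X Y - wcut W A B / (gvol W A * gvol W B) * (gvol W X * gvol W Y)|
      ≤ α * Real.sqrt (gvol W A * gvol W B)

/-- isoperimetric number `h(G) = min_{U : Vol(U) ≤ 1/2} w(U, U̅)/Vol(U)` -/
def isoNum {n : ℕ} (W : Matrix (Fin n) (Fin n) ℝ) : ℝ :=
  sInf {r | ∃ U : Finset (Fin n), U.Nonempty ∧ gvol W U ≤ 1/2 ∧ r = wcut W U Uᶜ / gvol W U}

/-- weighted cluster center of scalar vertex representatives -/
def sCenter {n k : ℕ} (d : Fin n → ℝ) (x : Fin n → ℝ) (P : Fin n → Fin k) (a : Fin k) : ℝ :=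
  (∑ j ∈ partSet P a, d j)⁻¹ * ∑ j ∈ partSet P a, d j * x j

/-- weighted k-variance of scalar vertex representatives w.r.t. the partition `P` -/
def sVar {n k : ℕ} (d : Fin n → ℝ) (x : Fin n → ℝ) (P : Fin n → Fin k) : ℝ :=
  ∑ a, ∑ j ∈ partSet P a, d j * (x j - sCenter d x P a) ^ 2

/-- minimum weighted 2-variance `S_2²` of scalar vertex representatives -/
def S2var {n : ℕ} (d : Fin n → ℝ) (x : Fin n → ℝ) : ℝ :=
  sInf {r | ∃ P : Fin n → Fin 2, Function.Surjective P ∧ r = sVar d x P}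

/-- weighted cluster center of vector vertex representatives -/
def vCenter {n k m : ℕ} (d : Fin n → ℝ) (x : Fin n → Fin m → ℝ) (P : Fin n → Fin k) (a : Fin k) :
    Fin m → ℝ :=
  fun t => (∑ j ∈ partSet P a, d j)⁻¹ * ∑ j ∈ partSet P a, d j * x j t

/-- weighted k-variance `S_k²(P, X)` of vector vertex representatives w.r.t. the partition `P` -/
def kVar {n k m : ℕ} (d : Fin n → ℝ) (x : Fin n → Fin m → ℝ) (P : Fin n → Fin k) : ℝ :=
  ∑ a, ∑ j ∈ partSet P a, d j * ∑ t, (x j t - vCenter d x P a t) ^ 2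

/-- normalized k-way cut of the partition `P`  -/
def fkCut {n k : ℕ} (W : Matrix (Fin n) (Fin n) ℝ) (P : Fin n → Fin k) : ℝ :=
  ∑ a, ∑ b ∈ univ.filter (fun b => a < b),
    (1 / gvol W (partSet P a) + 1 / gvol W (partSet P b)) * wcut W (partSet P a) (partSet P b)

/-- minimum normalized k-way cut `f_k(G)` (minimum over k-partitions with nonempty parts) -/
def fkMin {n : ℕ} (k : ℕ) (W : Matrix (Fin n) (Fin n) ℝ) : ℝ :=
  sInf {r | ∃ P : Fin n → Fin k, Function.Surjective P ∧ r = fkCut W P}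

/-- normalized k-way Newman-Girvan modularity of the partition `P` -/
def QMod {n k : ℕ} (W : Matrix (Fin n) (Fin n) ℝ) (P : Fin n → Fin k) : ℝ :=
  ∑ a, (gvol W (partSet P a))⁻¹ *
    (∑ i ∈ partSet P a, ∑ j ∈ partSet P a, (W i j - gdeg W i * gdeg W j))

/-- squared Euclidean distance of a vector from a linear subspace of `ℝ^n` -/
def distSqToSub {n : ℕ} (u : Fin n → ℝ) (F : Submodule ℝ (Fin n → ℝ)) : ℝ :=
  sInf {r | ∃ v ∈ F, r = dotR (u - v) (u - v)}


lemma gdeg_col {n : ℕ} (W : Matrix (Fin n) (Fin n) ℝ) (hsym : W.IsSymm) (j : Fin n) :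
    ∑ i, W i j = gdeg W j :=
  Finset.sum_congr rfl fun i _ => (hsym.apply i j).symm

lemma dirichlet_id {n : ℕ} (W : Matrix (Fin n) (Fin n) ℝ) (hsym : W.IsSymm) (x : Fin n → ℝ) :
    ∑ i, ∑ j, W i j * (x i - x j) ^ 2
      = 2 * ((∑ i, gdeg W i * x i ^ 2) - ∑ i, ∑ j, W i j * (x i * x j)) := by
  have key : ∀ i j : Fin n, W i j * (x i - x j) ^ 2
      = W i j * x i ^ 2 + W i j * x j ^ 2 - 2 * (W i j * (x i * x j)) := fun i j => by ring
  have hA : ∑ i, ∑ j, W i j * x i ^ 2 = ∑ i, gdeg W i * x i ^ 2 := by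
    refine Finset.sum_congr rfl fun i _ => ?_
    rw [← Finset.sum_mul]; rfl
  have hB : ∑ i : Fin n, ∑ j, W i j * x j ^ 2 = ∑ i, gdeg W i * x i ^ 2 := by
    rw [Finset.sum_comm]
    refine Finset.sum_congr rfl fun j _ => ?_
    rw [← Finset.sum_mul, gdeg_col W hsym j]
  have hC : ∑ i : Fin n, ∑ j, (2 : ℝ) * (W i j * (x i * x j))
      = 2 * ∑ i : Fin n, ∑ j, W i j * (x i * x j) := by
    rw [Finset.mul_sum]
    exact Finset.sum_congr rfl fun i _ => by rw [Finset.mul_sum]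
  calc ∑ i, ∑ j, W i j * (x i - x j) ^ 2
      = ∑ i : Fin n, ∑ j, (W i j * x i ^ 2 + W i j * x j ^ 2 - 2 * (W i j * (x i * x j))) := by
        exact Finset.sum_congr rfl fun i _ => Finset.sum_congr rfl fun j _ => key i j
    _ = _ := by
        simp only [Finset.sum_sub_distrib, Finset.sum_add_distrib]
        rw [hA, hB, hC]; ring

lemma sum_plus_id {n : ℕ} (W : Matrix (Fin n) (Fin n) ℝ) (hsym : W.IsSymm) (x : Fin n → ℝ) :
    ∑ i, ∑ j, W i j * (x i + x j) ^ 2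
      = 2 * ((∑ i, gdeg W i * x i ^ 2) + ∑ i, ∑ j, W i j * (x i * x j)) := by
  have key : ∀ i j : Fin n, W i j * (x i + x j) ^ 2
      = W i j * x i ^ 2 + W i j * x j ^ 2 + 2 * (W i j * (x i * x j)) := fun i j => by ring
  have hA : ∑ i, ∑ j, W i j * x i ^ 2 = ∑ i, gdeg W i * x i ^ 2 := by
    refine Finset.sum_congr rfl fun i _ => ?_
    rw [← Finset.sum_mul]; rfl
  have hB : ∑ i : Fin n, ∑ j, W i j * x j ^ 2 = ∑ i, gdeg W i * x i ^ 2 := by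
    rw [Finset.sum_comm]
    refine Finset.sum_congr rfl fun j _ => ?_
    rw [← Finset.sum_mul, gdeg_col W hsym j]
  have hC : ∑ i : Fin n, ∑ j, (2 : ℝ) * (W i j * (x i * x j))
      = 2 * ∑ i : Fin n, ∑ j, W i j * (x i * x j) := by
    rw [Finset.mul_sum]
    exact Finset.sum_congr rfl fun i _ => by rw [Finset.mul_sum]
  calc ∑ i, ∑ j, W i j * (x i + x j) ^ 2
      = ∑ i : Fin n, ∑ j, (W i j * x i ^ 2 + W i j * x j ^ 2 + 2 * (W i j * (x i * x j))) := by
        exact Finset.sum_congr rfl fun i _ => Finset.sum_congr rfl fun j _ => key i j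
    _ = _ := by
        simp only [Finset.sum_add_distrib]
        rw [hA, hB, hC]; ring

lemma eig_pointwise {n : ℕ} (W : Matrix (Fin n) (Fin n) ℝ) (hd : ∀ i, 0 < gdeg W i)
    (μ : ℝ) (v : Fin n → ℝ) (hv : normLap W *ᵥ v = μ • v) (i : Fin n) :
    gdeg W i * (v i / Real.sqrt (gdeg W i)) - ∑ j, W i j * (v j / Real.sqrt (gdeg W j))
      = μ * (gdeg W i * (v i / Real.sqrt (gdeg W i))) := by
  have hsi : ∀ k, Real.sqrt (gdeg W k) ≠ 0 := fun k => (Real.sqrt_pos.mpr (hd k)).ne'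
  have hsq : ∀ k, Real.sqrt (gdeg W k) * Real.sqrt (gdeg W k) = gdeg W k :=
    fun k => Real.mul_self_sqrt (hd k).le
  have h1 := congrFun hv i
  simp only [normLap, Matrix.sub_mulVec, Matrix.one_mulVec, Pi.sub_apply, Pi.smul_apply,
    smul_eq_mul] at h1
  have h2 : (normAdj W *ᵥ v) i = (∑ j, W i j * (v j / Real.sqrt (gdeg W j))) / Real.sqrt (gdeg W i) := by
    rw [Finset.sum_div]
    simp only [Matrix.mulVec, dotProduct, normAdj, Matrix.of_apply]
    refine Finset.sum_congr rfl fun j _ => ?_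
    field_simp
    try ring
  rw [h2] at h1
  have h3 := congrArg (fun z => Real.sqrt (gdeg W i) * z) h1
  simp only [mul_sub] at h3
  rw [mul_comm (Real.sqrt (gdeg W i)) (_ / Real.sqrt (gdeg W i)),
    div_mul_cancel₀ _ (hsi i)] at h3
  have h4 : gdeg W i * (v i / Real.sqrt (gdeg W i)) = Real.sqrt (gdeg W i) * v i := by
    rw [← hsq i]
    field_simp
    rw [Real.sqrt_sq (Real.sqrt_nonneg _), div_eq_iff (hsi i)]
    ring
  rw [h4, h3]; ring

lemma harmonic_const {n : ℕ} (W : Matrix (Fin n) (Fin n) ℝ) (hn : 0 < n)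
    (hsym : W.IsSymm) (hnn : ∀ i j, 0 ≤ W i j) (hconn : gConnected W)
    (x : Fin n → ℝ) (hx : ∀ i, gdeg W i * x i = ∑ j, W i j * x j) :
    ∀ i j, x i = x j := by
  obtain ⟨i₀, -, hmax⟩ := Finset.exists_max_image univ x ⟨⟨0, hn⟩, mem_univ _⟩
  set m := x i₀ with hm
  have step : ∀ a, x a = m → ∀ b, W a b ≠ 0 → x b = m := by
    intro a ha b hW
    have hsum : ∑ j, W a j * (m - x j) = 0 := by
      have e1 : ∑ j, W a j * (m - x j) = (∑ j, W a j) * m - ∑ j, W a j * x j := by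
        simp only [mul_sub]
        rw [Finset.sum_sub_distrib, ← Finset.sum_mul]
      rw [e1, ← hx a, show (∑ j, W a j) = gdeg W a from rfl, ha]
      ring
    have hall := (Finset.sum_eq_zero_iff_of_nonneg
      (fun j _ => mul_nonneg (hnn a j) (sub_nonneg.mpr (hmax j (mem_univ j))))).mp hsum
    rcases mul_eq_zero.mp (hall b (mem_univ b)) with h | h
    · exact absurd h hW
    · have := sub_eq_zero.mp h; linarith
  have aux : ∀ (a b : Fin n) (p : (SimpleGraph.fromRel fun i j => W i j ≠ 0).Walk a b),
      x a = m → x b = m := by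
    intro a b p
    induction p with
    | nil => exact id
    | @cons u v w' hadj q ih =>
      intro hu
      apply ih
      rw [SimpleGraph.fromRel_adj] at hadj
      rcases hadj.2 with h | h
      · exact step u hu v h
      · exact step u hu v (by rwa [hsym.apply u v] at h)
  have hreach : ∀ j, x j = m := by
    intro j
    obtain ⟨p⟩ := hconn.preconnected i₀ j
    exact aux i₀ j p rfl
  intro i j; rw [hreach i, hreach j]

lemma core {n : ℕ} (W : Matrix (Fin n) (Fin n) ℝ)
    (hsym : W.IsSymm) (hnn : ∀ i j, 0 ≤ W i j) (hd : ∀ i, 0 < gdeg W i)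
    (lam : ℝ) (hl0 : 0 ≤ lam) (hl1 : lam ≤ 1)
    (f : Fin n → ℝ)
    (heig : ∀ i, gdeg W i * f i - ∑ j, W i j * f j = lam * (gdeg W i * f i))
    (hposE : ∃ i, 0 < f i) (hnegE : ∃ i, f i ≤ 0)
    (hhalf : ∑ i ∈ univ.filter (fun i => 0 < f i), gdeg W i ≤ 1/2) :
    ∃ U : Finset (Fin n), U.Nonempty ∧ gvol W U ≤ 1/2 ∧
      wcut W U Uᶜ ≤ Real.sqrt (lam * (2 - lam)) * gvol W U := by
  have npos : 0 < n := (hposE.choose).pos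
  set g : Fin n → ℝ := fun i => max (f i) 0 with hgdef
  set h : Fin n → ℝ := fun i => g i ^ 2 with hhdef
  have hg0 : ∀ i, 0 ≤ g i := fun i => le_max_right _ _
  have hgf : ∀ i, f i ≤ g i := fun i => le_max_left _ _
  have hgpos : ∀ i, 0 < f i → g i = f i := fun i hi => max_eq_left hi.le
  have hgneg : ∀ i, f i ≤ 0 → g i = 0 := fun i hi => max_eq_right hi
  have hgpos' : ∀ i, g i ≠ 0 → 0 < f i := by
    intro i hi
    by_contra hc
    exact hi (hgneg i (not_lt.mp hc))
  have hh0 : ∀ i, 0 ≤ h i := fun i => sq_nonneg _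
  set M := ∑ i, gdeg W i * h i with hMdef
  set C := ∑ i, ∑ j, W i j * (g i * g j) with hCdef
  set Q := ∑ i, ∑ j, W i j * (g i - g j) ^ 2 with hQdef
  set P := ∑ i, ∑ j, W i j * (g i + g j) ^ 2 with hPdef
  have hQid : Q = 2 * (M - C) := dirichlet_id W hsym g
  have hPid : P = 2 * (M + C) := sum_plus_id W hsym g
  have hMpos : 0 < M := by
    obtain ⟨i0, hi0⟩ := hposE
    refine Finset.sum_pos' (fun i _ => mul_nonneg (hd i).le (hh0 i)) ⟨i0, mem_univ _, ?_⟩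
    have : 0 < h i0 := by simp only [hhdef]; rw [hgpos i0 hi0]; positivity
    exact mul_pos (hd i0) this
  have hQ0 : 0 ≤ Q :=
    Finset.sum_nonneg fun i _ => Finset.sum_nonneg fun j _ => mul_nonneg (hnn i j) (sq_nonneg _)
  have hP0 : 0 ≤ P :=
    Finset.sum_nonneg fun i _ => Finset.sum_nonneg fun j _ => mul_nonneg (hnn i j) (sq_nonneg _)
  -- Q ≤ 2 λ M
  have hMC : M - C ≤ lam * M := by
    have e1 : M - C = ∑ i, g i * (gdeg W i * g i - ∑ j, W i j * g j) := by
      rw [hMdef, hCdef, ← Finset.sum_sub_distrib]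
      refine Finset.sum_congr rfl fun i _ => ?_
      have e2 : ∑ j, W i j * (g i * g j) = g i * ∑ j, W i j * g j := by
        rw [Finset.mul_sum]
        exact Finset.sum_congr rfl fun j _ => by ring
      rw [e2]
      simp only [hhdef]
      ring
    rw [e1, hMdef, Finset.mul_sum]
    refine Finset.sum_le_sum fun i _ => ?_
    by_cases hfi : 0 < f i
    · have hgi : g i = f i := hgpos i hfi
      have hWg : ∑ j, W i j * f j ≤ ∑ j, W i j * g j :=
        Finset.sum_le_sum fun j _ => mul_le_mul_of_nonneg_left (hgf j) (hnn i j)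
      calc g i * (gdeg W i * g i - ∑ j, W i j * g j)
          ≤ g i * (gdeg W i * f i - ∑ j, W i j * f j) := by
            apply mul_le_mul_of_nonneg_left _ (hg0 i)
            rw [hgi]
            linarith
        _ = lam * (gdeg W i * h i) := by
            rw [heig i]
            simp only [hhdef]
            rw [hgi]
            ring
    · have hgi : g i = 0 := hgneg i (not_lt.mp hfi)
      have hhi : h i = 0 := by simp only [hhdef]; rw [hgi]; ring
      rw [hgi, hhi]
      simp
  have hQlam : Q ≤ 2 * lam * M := by rw [hQid]; linarith
  -- Cauchy-Schwarz : T² ≤ Q P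
  set T := ∑ i, ∑ j, W i j * |h i - h j| with hTdef
  have hT0 : 0 ≤ T :=
    Finset.sum_nonneg fun i _ => Finset.sum_nonneg fun j _ => mul_nonneg (hnn i j) (abs_nonneg _)
  have hCS : T ^ 2 ≤ Q * P := by
    set F : Fin n × Fin n → ℝ := fun p => Real.sqrt (W p.1 p.2) * |g p.1 - g p.2| with hF
    set G : Fin n × Fin n → ℝ := fun p => Real.sqrt (W p.1 p.2) * |g p.1 + g p.2| with hG
    have hT' : T = ∑ p : Fin n × Fin n, F p * G p := by
      rw [hTdef, show (∑ p : Fin n × Fin n, F p * G p)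
        = ∑ i : Fin n, ∑ j : Fin n, F (i, j) * G (i, j) from Fintype.sum_prod_type _]
      refine Finset.sum_congr rfl fun i _ => Finset.sum_congr rfl fun j _ => ?_
      set p : Fin n × Fin n := (i, j) with hp
      have hp1 : p.1 = i := rfl
      have hp2 : p.2 = j := rfl
      rw [← hp1, ← hp2]
      have habs : |h p.1 - h p.2| = |g p.1 - g p.2| * |g p.1 + g p.2| := by
        rw [← abs_mul]
        congr 1
        simp only [hhdef]
        ring
      rw [habs, hF, hG]
      simp only
      rw [show Real.sqrt (W p.1 p.2) * |g p.1 - g p.2| * (Real.sqrt (W p.1 p.2) * |g p.1 + g p.2|)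
          = (Real.sqrt (W p.1 p.2) * Real.sqrt (W p.1 p.2)) * (|g p.1 - g p.2| * |g p.1 + g p.2|)
          from by ring, Real.mul_self_sqrt (hnn p.1 p.2)]
    have hQ' : Q = ∑ p : Fin n × Fin n, F p ^ 2 := by
      rw [hQdef, show (∑ p : Fin n × Fin n, F p ^ 2)
        = ∑ i : Fin n, ∑ j : Fin n, F (i, j) ^ 2 from Fintype.sum_prod_type _]
      refine Finset.sum_congr rfl fun i _ => Finset.sum_congr rfl fun j _ => ?_
      set p : Fin n × Fin n := (i, j) with hp
      have hp1 : p.1 = i := rfl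
      have hp2 : p.2 = j := rfl
      rw [← hp1, ← hp2]
      rw [hF]
      simp only
      rw [mul_pow, sq_abs, Real.sq_sqrt (hnn p.1 p.2)]
    have hP' : P = ∑ p : Fin n × Fin n, G p ^ 2 := by
      rw [hPdef, show (∑ p : Fin n × Fin n, G p ^ 2)
        = ∑ i : Fin n, ∑ j : Fin n, G (i, j) ^ 2 from Fintype.sum_prod_type _]
      refine Finset.sum_congr rfl fun i _ => Finset.sum_congr rfl fun j _ => ?_
      set p : Fin n × Fin n := (i, j) with hp
      have hp1 : p.1 = i := rfl
      have hp2 : p.2 = j := rfl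
      rw [← hp1, ← hp2]
      rw [hG]
      simp only
      rw [mul_pow, sq_abs, Real.sq_sqrt (hnn p.1 p.2)]
    rw [hT', hQ', hP']
    exact Finset.sum_mul_sq_le_sq_mul_sq univ F G
  set κ := Real.sqrt (lam * (2 - lam)) with hκdef
  have hκ0 : 0 ≤ κ := Real.sqrt_nonneg _
  have hκsq : κ ^ 2 = lam * (2 - lam) := Real.sq_sqrt (mul_nonneg hl0 (by linarith))
  have hTbound : T ≤ 2 * κ * M := by
    have hPQ : P = 4 * M - Q := by rw [hPid, hQid]; ring
    have hfac : 0 ≤ (2 * lam * M - Q) * (2 * (2 - lam) * M - Q) := by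
      apply mul_nonneg
      · linarith
      · nlinarith
    have h1 : Q * P ≤ (2 * κ * M) ^ 2 := by
      have hexp : (2 * κ * M) ^ 2 = 4 * (lam * (2 - lam)) * M ^ 2 := by
        rw [show (2 * κ * M) ^ 2 = 4 * κ ^ 2 * M ^ 2 from by ring, hκsq]
      rw [hPQ, hexp]
      nlinarith [hfac]
    calc T = Real.sqrt (T ^ 2) := (Real.sqrt_sq hT0).symm
      _ ≤ Real.sqrt ((2 * κ * M) ^ 2) := Real.sqrt_le_sqrt (le_trans hCS h1)
      _ = 2 * κ * M := Real.sqrt_sq (by positivity)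
  -- sorting
  set φ := Tuple.sort h with hφdef
  have hmon : Monotone (h ∘ φ) := Tuple.monotone_sort h
  set H : ℕ → ℝ := fun t => if ht : 1 ≤ t ∧ t ≤ n then h (φ ⟨t - 1, by omega⟩) else 0 with hHdef
  set δ : ℕ → ℝ := fun l => H (l + 1) - H l with hδdef
  set S : ℕ → Finset (Fin n) := fun l => univ.filter (fun i => l ≤ ((φ.symm i : Fin n) : ℕ))
    with hSdef
  set χ : ℕ → Fin n → ℝ := fun l i => if l ≤ ((φ.symm i : Fin n) : ℕ) then 1 else 0 with hχdef
  have hH0 : H 0 = 0 := by simp [hHdef]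
  have hHs : ∀ (l : ℕ) (hl : l < n), H (l + 1) = h (φ ⟨l, hl⟩) := by
    intro l hl
    simp only [hHdef]
    rw [dif_pos (⟨by omega, by omega⟩ : 1 ≤ l + 1 ∧ l + 1 ≤ n)]
    congr 1
  have hHnn : ∀ t, 0 ≤ H t := by
    intro t
    simp only [hHdef]
    split
    · exact hh0 _
    · exact le_refl _
  have hmin : H 1 = 0 := by
    rw [hHs 0 npos]
    obtain ⟨i0, hi0⟩ := hnegE
    have hhi0 : h i0 = 0 := by simp only [hhdef]; rw [hgneg i0 hi0]; ring
    have hle : h (φ ⟨0, npos⟩) ≤ h i0 := by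
      have h1 : (⟨0, npos⟩ : Fin n) ≤ φ.symm i0 := by
        rw [Fin.le_def]; exact Nat.zero_le _
      have h2 := hmon h1
      simpa [Function.comp, Equiv.apply_symm_apply] using h2
    exact le_antisymm (hhi0 ▸ hle) (hh0 _)
  have hδ0 : ∀ l, l < n → 0 ≤ δ l := by
    intro l hl
    simp only [hδdef]
    rcases Nat.eq_zero_or_pos l with h0 | h0
    · subst h0; rw [hH0]; simpa using hHnn 1
    · have e1 : H (l + 1) = h (φ ⟨l, hl⟩) := hHs l hl
      have e2 : H l = h (φ ⟨l - 1, by omega⟩) := by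
        simp only [hHdef]
        rw [dif_pos (⟨h0, by omega⟩ : 1 ≤ l ∧ l ≤ n)]
      rw [e1, e2, sub_nonneg]
      exact hmon (Fin.mk_le_mk.mpr (by omega))
  -- representation of h
  have hrep : ∀ i, h i = ∑ l ∈ range n, δ l * χ l i := by
    intro i
    have hkn : ((φ.symm i : Fin n) : ℕ) < n := (φ.symm i).isLt
    have step1 : ∀ l, δ l * χ l i = if l ≤ ((φ.symm i : Fin n) : ℕ) then δ l else 0 := by
      intro l
      simp only [hχdef]
      split <;> simp
    rw [Finset.sum_congr rfl (fun l _ => step1 l)]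
    rw [show (∑ l ∈ range n, if l ≤ ((φ.symm i : Fin n) : ℕ) then δ l else 0)
        = ∑ l ∈ range (((φ.symm i : Fin n) : ℕ) + 1),
            (if l ≤ ((φ.symm i : Fin n) : ℕ) then δ l else 0) from
      (Finset.sum_subset (by intro x hx; simp only [mem_range] at *; omega)
        (by intro x hx hnx; simp only [mem_range] at hx hnx; rw [if_neg]; omega)).symm]
    rw [Finset.sum_congr rfl (fun l hl => if_pos (by simp only [mem_range] at hl; omega))]
    have htel : ∑ l ∈ range (((φ.symm i : Fin n) : ℕ) + 1), δ l
        = H (((φ.symm i : Fin n) : ℕ) + 1) - H 0 := by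
      simp only [hδdef]
      exact Finset.sum_range_sub H _
    rw [htel, hH0, hHs _ hkn, sub_zero]
    have : (⟨((φ.symm i : Fin n) : ℕ), hkn⟩ : Fin n) = φ.symm i := by
      apply Fin.ext; rfl
    rw [this, Equiv.apply_symm_apply]
  -- representation of |h i - h j|
  have hrep2 : ∀ i j, ((φ.symm i : Fin n) : ℕ) ≤ ((φ.symm j : Fin n) : ℕ) →
      |h i - h j| = ∑ l ∈ range n, δ l * |χ l i - χ l j| := by
    intro i j hij
    have hhij : h i ≤ h j := by
      have h1 : φ.symm i ≤ φ.symm j := by rw [Fin.le_def]; exact hij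
      have h2 := hmon h1
      simpa [Function.comp, Equiv.apply_symm_apply] using h2
    rw [abs_of_nonpos (by linarith), neg_sub]
    have e1 : h j - h i = ∑ l ∈ range n, (δ l * χ l j - δ l * χ l i) := by
      rw [Finset.sum_sub_distrib, ← hrep i, ← hrep j]
    rw [e1]
    refine Finset.sum_congr rfl fun l _ => ?_
    by_cases h1 : l ≤ ((φ.symm i : Fin n) : ℕ)
    · have h2 : l ≤ ((φ.symm j : Fin n) : ℕ) := le_trans h1 hij
      simp [hχdef, h1, h2]
    · by_cases h2 : l ≤ ((φ.symm j : Fin n) : ℕ)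
      · simp [hχdef, h1, h2]
      · simp [hχdef, h1, h2]
  have hrepAbs : ∀ i j, |h i - h j| = ∑ l ∈ range n, δ l * |χ l i - χ l j| := by
    intro i j
    rcases le_total ((φ.symm i : Fin n) : ℕ) ((φ.symm j : Fin n) : ℕ) with hc | hc
    · exact hrep2 i j hc
    · rw [abs_sub_comm, hrep2 j i hc]
      exact Finset.sum_congr rfl fun l _ => by rw [abs_sub_comm]
  -- coarea for M
  have hvolS : ∀ l, ∑ i, gdeg W i * χ l i = gvol W (S l) := by
    intro l
    have e1 : ∀ i : Fin n, gdeg W i * χ l i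
        = if l ≤ ((φ.symm i : Fin n) : ℕ) then gdeg W i else 0 := by
      intro i
      simp only [hχdef]
      split <;> simp
    rw [Finset.sum_congr rfl fun i _ => e1 i]
    rw [show gvol W (S l) = ∑ i ∈ S l, gdeg W i from rfl, hSdef]
    simp only
    rw [Finset.sum_filter]
  have hM : M = ∑ l ∈ range n, δ l * gvol W (S l) := by
    calc M = ∑ i, ∑ l ∈ range n, gdeg W i * (δ l * χ l i) := by
          rw [hMdef]
          exact Finset.sum_congr rfl fun i _ => by rw [hrep i, Finset.mul_sum]
      _ = ∑ l ∈ range n, ∑ i, gdeg W i * (δ l * χ l i) := Finset.sum_comm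
      _ = ∑ l ∈ range n, δ l * gvol W (S l) := by
          refine Finset.sum_congr rfl fun l _ => ?_
          rw [← hvolS l, Finset.mul_sum]
          exact Finset.sum_congr rfl fun i _ => by ring
  -- cut identity
  have cutid : ∀ A : Finset (Fin n),
      (∑ i, ∑ j, W i j * |(if i ∈ A then (1:ℝ) else 0) - (if j ∈ A then (1:ℝ) else 0)|)
        = 2 * wcut W A Aᶜ := by
    intro A
    have hsplit : ∀ FF : Fin n → ℝ, ∑ i, FF i = ∑ i ∈ A, FF i + ∑ i ∈ Aᶜ, FF i :=
      fun FF => (Finset.sum_add_sum_compl A FF).symm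
    rw [hsplit]
    have e1 : ∑ i ∈ A, ∑ j, W i j * |(if i ∈ A then (1:ℝ) else 0) - (if j ∈ A then (1:ℝ) else 0)|
        = wcut W A Aᶜ := by
      refine Finset.sum_congr rfl fun i hi => ?_
      have e : ∀ j, W i j * |(if i ∈ A then (1:ℝ) else 0) - (if j ∈ A then (1:ℝ) else 0)|
          = if j ∈ Aᶜ then W i j else 0 := by
        intro j
        rw [if_pos hi]
        by_cases hj : j ∈ A <;> simp [hj, Finset.mem_compl]
      rw [Finset.sum_congr rfl fun j _ => e j, Finset.sum_ite_mem, univ_inter]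
    have e2 : ∑ i ∈ Aᶜ, ∑ j, W i j * |(if i ∈ A then (1:ℝ) else 0) - (if j ∈ A then (1:ℝ) else 0)|
        = wcut W Aᶜ A := by
      refine Finset.sum_congr rfl fun i hi => ?_
      have hi' : i ∉ A := Finset.mem_compl.mp hi
      have e : ∀ j, W i j * |(if i ∈ A then (1:ℝ) else 0) - (if j ∈ A then (1:ℝ) else 0)|
          = if j ∈ A then W i j else 0 := by
        intro j
        rw [if_neg hi']
        by_cases hj : j ∈ A <;> simp [hj]
      rw [Finset.sum_congr rfl fun j _ => e j, Finset.sum_ite_mem, univ_inter]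
    have e3 : wcut W Aᶜ A = wcut W A Aᶜ := by
      rw [wcut, wcut, Finset.sum_comm (f := fun i j => W i j)]
      exact Finset.sum_congr rfl fun j _ => Finset.sum_congr rfl fun i _ => hsym.apply j i
    rw [e1, e2, e3]
    ring
  have hχS : ∀ l i, χ l i = if i ∈ S l then 1 else 0 := by
    intro l i
    simp [hχdef, hSdef]
  have hT : T = ∑ l ∈ range n, δ l * (2 * wcut W (S l) (S l)ᶜ) := by
    calc T = ∑ i, ∑ j, ∑ l ∈ range n, δ l * (W i j * |χ l i - χ l j|) := by
          rw [hTdef]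
          refine Finset.sum_congr rfl fun i _ => Finset.sum_congr rfl fun j _ => ?_
          rw [hrepAbs i j, Finset.mul_sum]
          exact Finset.sum_congr rfl fun l _ => by ring
      _ = ∑ l ∈ range n, ∑ i, ∑ j, δ l * (W i j * |χ l i - χ l j|) := by
          rw [show (∑ i : Fin n, ∑ j : Fin n, ∑ l ∈ range n, δ l * (W i j * |χ l i - χ l j|))
              = ∑ i : Fin n, ∑ l ∈ range n, ∑ j : Fin n, δ l * (W i j * |χ l i - χ l j|) from
            Finset.sum_congr rfl fun i _ => Finset.sum_comm]
          exact Finset.sum_comm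
      _ = ∑ l ∈ range n, δ l * (2 * wcut W (S l) (S l)ᶜ) := by
          refine Finset.sum_congr rfl fun l _ => ?_
          rw [← cutid (S l), Finset.mul_sum]
          refine Finset.sum_congr rfl fun i _ => ?_
          rw [Finset.mul_sum]
          refine Finset.sum_congr rfl fun j _ => ?_
          rw [hχS l i, hχS l j]
  -- final contradiction argument
  by_contra hcon
  push_neg at hcon
  have main : ∀ l ∈ range n, 0 < δ l → κ * gvol W (S l) < wcut W (S l) (S l)ᶜ := by
    intro l hl hδl
    have hln : l < n := mem_range.mp hl
    have hposl : 0 < h (φ ⟨l, hln⟩) := by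
      have e1 : H (l + 1) = h (φ ⟨l, by omega⟩) := hHs l hln
      have e2 : H l < H (l + 1) := by
        have := hδl
        simp only [hδdef] at this
        linarith
      calc (0:ℝ) ≤ H l := hHnn l
        _ < H (l + 1) := e2
        _ = h (φ ⟨l, hln⟩) := e1
    have hsub : S l ⊆ univ.filter (fun i => 0 < f i) := by
      intro i hi
      simp only [hSdef, mem_filter, mem_univ, true_and] at hi ⊢
      have hle : h (φ ⟨l, hln⟩) ≤ h i := by
        have h1 : (⟨l, hln⟩ : Fin n) ≤ φ.symm i := by rw [Fin.le_def]; exact hi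
        have h2 := hmon h1
        simpa [Function.comp, Equiv.apply_symm_apply] using h2
      apply hgpos'
      intro hgi
      have : h i = 0 := by simp only [hhdef]; rw [hgi]; ring
      rw [this] at hle
      linarith
    have hne : (S l).Nonempty := by
      refine ⟨φ ⟨n - 1, by omega⟩, ?_⟩
      simp only [hSdef, mem_filter, mem_univ, true_and]
      rw [Equiv.symm_apply_apply]
      simp only
      omega
    have hvle : gvol W (S l) ≤ 1/2 :=
      le_trans (Finset.sum_le_sum_of_subset_of_nonneg hsub (fun i _ _ => (hd i).le)) hhalf
    exact hcon (S l) hne hvle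
  have key : ∀ l ∈ range n, κ * (δ l * gvol W (S l)) ≤ δ l * wcut W (S l) (S l)ᶜ := by
    intro l hl
    rcases eq_or_lt_of_le (hδ0 l (mem_range.mp hl)) with he | hlt
    · rw [← he]; simp
    · have := main l hl hlt
      calc κ * (δ l * gvol W (S l)) = δ l * (κ * gvol W (S l)) := by ring
        _ ≤ δ l * wcut W (S l) (S l)ᶜ := mul_le_mul_of_nonneg_left this.le hlt.le
  have hex : ∃ l ∈ range n, κ * (δ l * gvol W (S l)) < δ l * wcut W (S l) (S l)ᶜ := by
    have hMne : (∑ l ∈ range n, δ l * gvol W (S l)) ≠ 0 := by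
      rw [← hM]; exact ne_of_gt hMpos
    obtain ⟨l0, hl0mem, hl0⟩ := Finset.exists_ne_zero_of_sum_ne_zero hMne
    have hδl := hδ0 l0 (mem_range.mp hl0mem)
    have hδpos : 0 < δ l0 :=
      lt_of_le_of_ne hδl (fun he => hl0 (by rw [← he, zero_mul]))
    have := main l0 hl0mem hδpos
    refine ⟨l0, hl0mem, ?_⟩
    calc κ * (δ l0 * gvol W (S l0)) = δ l0 * (κ * gvol W (S l0)) := by ring
      _ < δ l0 * wcut W (S l0) (S l0)ᶜ := by
        exact mul_lt_mul_of_pos_left this hδpos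
  have hlt := Finset.sum_lt_sum key hex
  have hL : ∑ l ∈ range n, κ * (δ l * gvol W (S l)) = κ * M := by
    rw [← Finset.mul_sum, ← hM]
  have hR : ∑ l ∈ range n, δ l * wcut W (S l) (S l)ᶜ = T / 2 := by
    have : T = 2 * ∑ l ∈ range n, δ l * wcut W (S l) (S l)ᶜ := by
      rw [hT, Finset.mul_sum]
      exact Finset.sum_congr rfl fun l _ => by ring
    linarith
  rw [hL, hR] at hlt
  linarith

/-- if `λ₂ ≤ 1` then `h(G) ≤ √(λ₂ (2 - λ₂))`. -/
theorem statement6 {n : ℕ} (hn : 2 ≤ n) (W : Matrix (Fin n) (Fin n) ℝ)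
    (hsym : W.IsSymm) (hnn : ∀ i j, 0 ≤ W i j) (hdiag : ∀ i, W i i = 0)
    (hd : ∀ i, 0 < gdeg W i) (hvol : gvol W Finset.univ = 1) (hconn : gConnected W)
    (lam : Fin n → ℝ) (u : Fin n → Fin n → ℝ)
    (hmono : Monotone lam)
    (hortho : IsOrthonormalSys u)
    (heig : ∀ i, normLap W *ᵥ u i = lam i • u i)
    (h0 : lam ⟨0, by omega⟩ = 0)
    (hlam : lam ⟨1, by omega⟩ ≤ 1) :
    isoNum W ≤ Real.sqrt (lam ⟨1, by omega⟩ * (2 - lam ⟨1, by omega⟩)) := by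
  have npos : 0 < n := by omega
  have h1n : 1 < n := by omega
  show isoNum W ≤ Real.sqrt (lam ⟨1, h1n⟩ * (2 - lam ⟨1, h1n⟩))
  set lam2 := lam ⟨1, h1n⟩ with hlam2def
  have hlam' : lam2 ≤ 1 := hlam
  have hl0 : 0 ≤ lam2 :=
    le_trans (le_of_eq h0.symm) (hmono (Fin.mk_le_mk.mpr (by omega)))
  suffices hsuff : ∃ U : Finset (Fin n), U.Nonempty ∧ gvol W U ≤ 1/2 ∧
      wcut W U Uᶜ ≤ Real.sqrt (lam2 * (2 - lam2)) * gvol W U by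
    obtain ⟨U, hUne, hUv, hUc⟩ := hsuff
    have hUpos : 0 < gvol W U := Finset.sum_pos (fun i _ => hd i) hUne
    have hmem : wcut W U Uᶜ / gvol W U ∈
        {r | ∃ V : Finset (Fin n), V.Nonempty ∧ gvol W V ≤ 1/2 ∧ r = wcut W V Vᶜ / gvol W V} :=
      ⟨U, hUne, hUv, rfl⟩
    have hbdd : BddBelow
        {r | ∃ V : Finset (Fin n), V.Nonempty ∧ gvol W V ≤ 1/2 ∧ r = wcut W V Vᶜ / gvol W V} := by
      refine ⟨0, ?_⟩
      rintro r ⟨V, hV1, hV2, rfl⟩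
      exact div_nonneg
        (Finset.sum_nonneg fun i _ => Finset.sum_nonneg fun j _ => hnn i j)
        (Finset.sum_nonneg fun i _ => (hd i).le)
    calc isoNum W ≤ wcut W U Uᶜ / gvol W U := csInf_le hbdd hmem
      _ ≤ Real.sqrt (lam2 * (2 - lam2)) := by
          rw [div_le_iff₀ hUpos]; exact hUc
  set sq : Fin n → ℝ := fun i => Real.sqrt (gdeg W i) with hsqdef
  have hsqpos : ∀ i, 0 < sq i := fun i => Real.sqrt_pos.mpr (hd i)
  have hsqs : ∀ i, sq i * sq i = gdeg W i := fun i => Real.mul_self_sqrt (hd i).le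
  set f : Fin n → ℝ := fun i => u ⟨1, h1n⟩ i / sq i with hfdef
  have heigf : ∀ i, gdeg W i * f i - ∑ j, W i j * f j = lam2 * (gdeg W i * f i) :=
    fun i => eig_pointwise W hd lam2 (u ⟨1, h1n⟩) (heig ⟨1, h1n⟩) i
  -- the 0-eigenvector is proportional to sq
  set f0 : Fin n → ℝ := fun i => u ⟨0, npos⟩ i / sq i with hf0def
  have heigf0 : ∀ i, gdeg W i * f0 i - ∑ j, W i j * f0 j = 0 * (gdeg W i * f0 i) := by
    intro i
    refine eig_pointwise W hd 0 (u ⟨0, npos⟩) ?_ i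
    rw [heig ⟨0, npos⟩, show lam ⟨0, npos⟩ = 0 from h0, zero_smul]
  have hx : ∀ i, gdeg W i * f0 i = ∑ j, W i j * f0 j := by
    intro i
    have := heigf0 i
    rw [zero_mul] at this
    linarith
  have hconst := harmonic_const W npos hsym hnn hconn f0 hx
  set c := f0 ⟨0, npos⟩ with hcdef
  have hu0 : ∀ i, u ⟨0, npos⟩ i = sq i * c := by
    intro i
    have hfi : f0 i = c := hconst i ⟨0, npos⟩
    rw [← hfi]
    simp only [hf0def]
    rw [mul_comm, div_mul_cancel₀ _ (hsqpos i).ne']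
  have hne01 : (⟨0, npos⟩ : Fin n) ≠ (⟨1, h1n⟩ : Fin n) := by
    intro hcon
    simpa using congrArg Fin.val hcon
  have horth := hortho ⟨0, npos⟩ ⟨1, h1n⟩
  rw [if_neg hne01] at horth
  have hnorm0 := hortho ⟨0, npos⟩ ⟨0, npos⟩
  rw [if_pos rfl] at hnorm0
  have hnorm1 := hortho ⟨1, h1n⟩ ⟨1, h1n⟩
  rw [if_pos rfl] at hnorm1
  have hcne : c ≠ 0 := by
    intro hc0
    rw [dotR] at hnorm0
    have hz : ∑ i, u ⟨0, npos⟩ i * u ⟨0, npos⟩ i = 0 :=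
      Finset.sum_eq_zero fun i _ => by rw [hu0 i, hc0]; ring
    rw [hz] at hnorm0
    norm_num at hnorm0
  have hsum0 : ∑ i, gdeg W i * f i = 0 := by
    have e1 : dotR (u ⟨0, npos⟩) (u ⟨1, h1n⟩) = c * ∑ i, gdeg W i * f i := by
      rw [dotR, Finset.mul_sum]
      refine Finset.sum_congr rfl fun i _ => ?_
      rw [hu0 i]
      simp only [hfdef]
      rw [← hsqs i]
      field_simp [(hsqpos i).ne', (hsqpos ⟨0, npos⟩).ne']
      try ring
    rw [e1] at horth
    rcases mul_eq_zero.mp horth with hcc | hs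
    · exact absurd hcc hcne
    · exact hs
  have hfne : ∃ i, f i ≠ 0 := by
    by_contra hc
    push_neg at hc
    have hz : ∑ i, u ⟨1, h1n⟩ i * u ⟨1, h1n⟩ i = 0 := by
      refine Finset.sum_eq_zero fun i _ => ?_
      have h2 := hc i
      simp only [hfdef] at h2
      rcases div_eq_zero_iff.mp h2 with h3 | h3
      · rw [h3]; ring
      · exact absurd h3 (hsqpos i).ne'
    rw [dotR, hz] at hnorm1
    norm_num at hnorm1
  have hpos : ∃ i, 0 < f i := by
    by_contra hcp
    push_neg at hcp
    obtain ⟨iw, hiw⟩ := hfne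
    have hz := (Finset.sum_eq_zero_iff_of_nonpos
      (fun i _ => mul_nonpos_iff.mpr (Or.inl ⟨(hd i).le, hcp i⟩))).mp hsum0
    rcases mul_eq_zero.mp (hz iw (mem_univ _)) with h3 | h3
    · exact absurd h3 (hd iw).ne'
    · exact hiw h3
  have hneg : ∃ i, f i < 0 := by
    by_contra hcn
    push_neg at hcn
    obtain ⟨iw, hiw⟩ := hpos
    have hz := (Finset.sum_eq_zero_iff_of_nonneg
      (fun i _ => mul_nonneg (hd i).le (hcn i))).mp hsum0
    rcases mul_eq_zero.mp (hz iw (mem_univ _)) with h3 | h3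
    · exact absurd h3 (hd iw).ne'
    · rw [h3] at hiw; exact lt_irrefl 0 hiw
  have hdisj : Disjoint (univ.filter (fun i => 0 < f i)) (univ.filter (fun i => f i < 0)) := by
    rw [Finset.disjoint_left]
    intro a ha hb
    simp only [mem_filter] at ha hb
    linarith [ha.2, hb.2]
  have hvsplit : (∑ i ∈ univ.filter (fun i => 0 < f i), gdeg W i)
      + (∑ i ∈ univ.filter (fun i => f i < 0), gdeg W i) ≤ 1 := by
    rw [← Finset.sum_union hdisj]
    calc ∑ i ∈ (univ.filter (fun i => 0 < f i)) ∪ (univ.filter (fun i => f i < 0)), gdeg W i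
        ≤ ∑ i, gdeg W i :=
          Finset.sum_le_sum_of_subset_of_nonneg (Finset.subset_univ _) (fun i _ _ => (hd i).le)
      _ = 1 := hvol
  rcases le_or_gt (∑ i ∈ univ.filter (fun i => 0 < f i), gdeg W i) (1/2) with hc | hc
  · exact core W hsym hnn hd lam2 hl0 hlam' f heigf hpos
      ⟨hneg.choose, hneg.choose_spec.le⟩ hc
  · have hchalf : ∑ i ∈ univ.filter (fun i => 0 < -f i), gdeg W i ≤ 1/2 := by
      have hfe : univ.filter (fun i => 0 < -f i) = univ.filter (fun i => f i < 0) := by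
        apply Finset.filter_congr
        intro i _
        simp [neg_pos]
      rw [hfe]
      linarith
    exact core W hsym hnn hd lam2 hl0 hlam' (fun i => -f i)
      (by
        intro i
        simp only [mul_neg, Finset.sum_neg_distrib]
        have := heigf i
        linarith)
      ⟨hneg.choose, by simpa using neg_pos.mpr hneg.choose_spec⟩
      ⟨hpos.choose, by simpa using (hpos.choose_spec).le⟩
      hchalf

end
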